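/- Let d ≥ 1, T ≥ 4d, Δ = 1/(8√T), and for each t let x_t ∈ ℝ^d with ‖x_t‖ ≤ 1. Define τ_i = min(T, min{t ≥ 1 : Σ_{s=1}^t x_{si}² ≥ T/d − 1}) and U_i(σ) = Σ_{t=1}^{τ_i} (1/√d + σ x_{ti})². Then U_i(σ) ≤ 4T/d for every i ∈ [d] and σ ∈ {−1, 1}, and U_i(1) + U_i(−1) = 2 Σ_{t=1}^{τ_i} (1/d + x_{ti}²) ≥ 2(T/d − 1). -/

import Mathlib

open Finset

/-- Properties of the truncated exploration counts in the unit-ball lower bound: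
with `τ_i = T ∧ min{t ≥ 1 : Σ_{s=1}^t x_{si}² ≥ T/d − 1}` and
`U_i(σ) = Σ_{t=1}^{τ_i} (1/√d + σ x_{ti})²`, one has `U_i(σ) ≤ 4T/d` for `σ ∈ {±1}`,
and `U_i(1) + U_i(−1) = 2 Σ_{t=1}^{τ_i} (1/d + x_{ti}²) ≥ 2(T/d − 1)`. -/
theorem stmt17 (d T : ℕ) (hd : 1 ≤ d) (hT : 4 * d ≤ T)
    (Δ : ℝ) (hΔ : Δ = 1 / (8 * Real.sqrt T))
    (x : ℕ → Fin d → ℝ) (hx : ∀ t, ∑ i, (x t i) ^ 2 ≤ 1)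
    (τ : Fin d → ℕ)
    (hτ1 : ∀ i, 1 ≤ τ i) (hτT : ∀ i, τ i ≤ T)
    (hmin : ∀ i, ∀ t, t < τ i →
      ∑ s ∈ Finset.Icc 1 t, (x s i) ^ 2 < (T : ℝ) / d - 1)
    (hreach : ∀ i, τ i = T ∨
      (T : ℝ) / d - 1 ≤ ∑ s ∈ Finset.Icc 1 (τ i), (x s i) ^ 2) :
    (∀ i, ∀ σ : ℝ, σ = 1 ∨ σ = -1 →
        ∑ t ∈ Finset.Icc 1 (τ i), (1 / Real.sqrt d + σ * x t i) ^ 2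
          ≤ 4 * (T : ℝ) / d) ∧
    (∀ i,
      (∑ t ∈ Finset.Icc 1 (τ i), (1 / Real.sqrt d + x t i) ^ 2)
        + ∑ t ∈ Finset.Icc 1 (τ i), (1 / Real.sqrt d + (-1) * x t i) ^ 2
        = 2 * ∑ t ∈ Finset.Icc 1 (τ i), (1 / (d : ℝ) + (x t i) ^ 2) ∧
      2 * ((T : ℝ) / d - 1)
        ≤ 2 * ∑ t ∈ Finset.Icc 1 (τ i), (1 / (d : ℝ) + (x t i) ^ 2)) := by
  have hd0 : (0:ℝ) < d := by exact_mod_cast hd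
  have hT0 : (0:ℝ) ≤ T := Nat.cast_nonneg T
  have hsq : (1 / Real.sqrt d) ^ 2 = 1 / (d:ℝ) := by
    rw [div_pow, one_pow, Real.sq_sqrt hd0.le]
  have hxle : ∀ t (i : Fin d), (x t i)^2 ≤ 1 := fun t i =>
    le_trans (Finset.single_le_sum (f := fun j => (x t j)^2) (fun j _ => sq_nonneg _) (Finset.mem_univ i)) (hx t)
  have hcard : ∀ i, ((Finset.Icc 1 (τ i)).card : ℝ) = (τ i : ℝ) := by
    intro i; rw [Nat.card_Icc]; push_cast; ring
  have hxsum : ∀ i, ∑ t ∈ Finset.Icc 1 (τ i), (x t i)^2 ≤ (T:ℝ)/d := by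
    intro i
    have h1 : τ i - 1 + 1 = τ i := Nat.succ_pred_eq_of_pos (hτ1 i)
    have hsplit : ∑ t ∈ Finset.Icc 1 (τ i), (x t i)^2
        = (∑ t ∈ Finset.Icc 1 (τ i - 1), (x t i)^2) + (x (τ i) i)^2 := by
      rw [← h1, Finset.sum_Icc_succ_top (by omega : 1 ≤ τ i - 1 + 1), Nat.add_sub_cancel]
    have hm := hmin i (τ i - 1) (by omega)
    have := hxle (τ i) i
    rw [hsplit]; linarith
  constructor
  · intro i σ hσ
    have hσ2 : σ^2 = 1 := by rcases hσ with h|h <;> simp [h]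
    have hb : ∀ t, (1/Real.sqrt d + σ * x t i)^2 ≤ 2/(d:ℝ) + 2*(x t i)^2 := by
      intro t
      have key : ∀ a b : ℝ, (a+b)^2 ≤ 2*a^2 + 2*b^2 := fun a b => by
        nlinarith [sq_nonneg (a-b)]
      calc (1/Real.sqrt d + σ * x t i)^2
          ≤ 2*(1/Real.sqrt d)^2 + 2*(σ * x t i)^2 := key _ _
        _ = 2/(d:ℝ) + 2*(x t i)^2 := by rw [hsq, mul_pow, hσ2]; ring
    have h1 : ∑ t ∈ Finset.Icc 1 (τ i), (1/Real.sqrt d + σ * x t i)^2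
        ≤ ∑ t ∈ Finset.Icc 1 (τ i), (2/(d:ℝ) + 2*(x t i)^2) :=
      Finset.sum_le_sum (fun t _ => hb t)
    have h2 : ∑ t ∈ Finset.Icc 1 (τ i), (2/(d:ℝ) + 2*(x t i)^2)
        = (τ i : ℝ) * (2/d) + 2 * ∑ t ∈ Finset.Icc 1 (τ i), (x t i)^2 := by
      rw [Finset.sum_add_distrib, Finset.sum_const, Finset.mul_sum, nsmul_eq_mul, hcard]
    have hτ : (τ i : ℝ) ≤ T := by exact_mod_cast hτT i
    have hxs := hxsum i
    have : (τ i : ℝ) * (2/d) ≤ 2*T/d := by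
      rw [show (τ i:ℝ)*(2/(d:ℝ)) = 2*(τ i)/d by ring]
      gcongr
    calc ∑ t ∈ Finset.Icc 1 (τ i), (1/Real.sqrt d + σ * x t i)^2
        ≤ (τ i : ℝ) * (2/d) + 2 * ∑ t ∈ Finset.Icc 1 (τ i), (x t i)^2 := by
          rw [← h2]; exact h1
      _ ≤ 2*T/d + 2*(T/d) := by linarith
      _ = 4 * (T:ℝ) / d := by ring
  · intro i
    constructor
    · rw [← Finset.sum_add_distrib, Finset.mul_sum]
      refine Finset.sum_congr rfl fun t _ => ?_
      linear_combination 2 * hsq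
    · have hconst : ∑ t ∈ Finset.Icc 1 (τ i), (1/(d:ℝ) + (x t i)^2)
          = (τ i : ℝ) * (1/d) + ∑ t ∈ Finset.Icc 1 (τ i), (x t i)^2 := by
        rw [Finset.sum_add_distrib, Finset.sum_const, nsmul_eq_mul, hcard]
      rw [hconst]
      have hnn : (0:ℝ) ≤ ∑ t ∈ Finset.Icc 1 (τ i), (x t i)^2 :=
        Finset.sum_nonneg fun t _ => sq_nonneg _
      rcases hreach i with h | h
      · have : (τ i : ℝ) = T := by exact_mod_cast congrArg Nat.cast h
        rw [this]
        have : (T:ℝ) * (1/d) = T/d := by ring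
        rw [this]; linarith
      · have : (0:ℝ) ≤ (τ i : ℝ) * (1/d) :=
          mul_nonneg (Nat.cast_nonneg _) (by positivity)
        linarith
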